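/- Let τ ∈ {1,−1} and λ, e₁, e₂, π ∈ ℝ, and consider g(z₁,z₂) = τλz₁z₂ + ½τz₂² + e₁z₁ + e₂z₂ over all (z₁,z₂) ∈ ℝ² with τz₁z₂ ≤ π. If τ = −1, or (τ = 1 and λ > 0), or (τ = 1 and e₁ ≠ 0), then g is unbounded from below on this set: for every M ∈ ℝ there exists (z₁,z₂) with τz₁z₂ ≤ π and g(z₁,z₂) < M. -/

import Mathlib

/-- linear helper: for `a > 0`, `-(a*t)+b` drops below any `M` for some `t ≥ A`. -/
lemma lin_unbdd (a b A M : ℝ) (ha : 0 < a) : ∃ t : ℝ, A ≤ t ∧ -(a * t) + b < M := by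
  refine ⟨max A ((b - M + 1) / a), le_max_left _ _, ?_⟩
  have h : (b - M + 1) / a ≤ max A ((b - M + 1) / a) := le_max_right _ _
  have h2 : b - M + 1 ≤ a * max A ((b - M + 1) / a) := by
    rw [div_le_iff₀ ha] at h; linarith [h]
  linarith

/-- Theorem 2.5, case 3 (unbounded) of Jiang–Li–Wu:
for `g(z₁,z₂) = τλ z₁ z₂ + ½τ z₂² + e₁ z₁ + e₂ z₂` over `{τ z₁ z₂ ≤ π}`,
if `τ = −1`, or `τ = 1 ∧ λ > 0`, or `τ = 1 ∧ e₁ ≠ 0`, then `g` is unbounded from below. -/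
theorem stmt_8 (τ lam e₁ e₂ p : ℝ) (hτ : τ = 1 ∨ τ = -1)
    (hcase : τ = -1 ∨ (τ = 1 ∧ 0 < lam) ∨ (τ = 1 ∧ e₁ ≠ 0)) :
    ∀ M : ℝ, ∃ z₁ z₂ : ℝ, τ * (z₁ * z₂) ≤ p ∧
      τ * lam * (z₁ * z₂) + (1/2) * τ * z₂ ^ 2 + e₁ * z₁ + e₂ * z₂ < M := by
  intro M
  rcases hcase with h | ⟨h1, hl⟩ | ⟨h1, he⟩
  · -- τ = -1 : take z₁ = -p/t, z₂ = t with t ≥ 1 large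
    subst h
    set C := lam * p + e₁ * (-p) + 0 with hC
    -- g(-p/t, t) = lam*p - t²/2 + (e₁*(-p)/t) + e₂ t ; messy, instead bound directly
    set t := max 1 (max (2*e₂ + 1) (2*(lam*p + |e₁*p| - M) + 1)) with ht
    have ht1 : (1:ℝ) ≤ t := le_max_left _ _
    have ht0 : 0 < t := lt_of_lt_of_le one_pos ht1
    have ht2 : 2*e₂ + 1 ≤ t := le_trans (le_max_left _ _) (le_max_right _ _)
    have ht3 : 2*(lam*p + |e₁*p| - M) + 1 ≤ t :=
      le_trans (le_max_right _ _) (le_max_right _ _)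
    refine ⟨-p / t, t, ?_, ?_⟩
    · have : (-p / t) * t = -p := div_mul_cancel₀ _ (ne_of_gt ht0)
      rw [this]; ring_nf; linarith
    · have hmul : (-p / t) * t = -p := div_mul_cancel₀ _ (ne_of_gt ht0)
      rw [hmul]
      have habs : e₁ * (-p / t) ≤ |e₁ * p| := by
        have h1' : e₁ * (-p / t) ≤ |e₁ * (-p / t)| := le_abs_self _
        have h2' : |e₁ * (-p / t)| = |e₁ * p| / t := by
          rw [abs_mul, abs_mul, abs_div, abs_neg, abs_of_pos ht0, mul_div_assoc]
        have h3' : |e₁ * p| / t ≤ |e₁ * p| := by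
          rw [div_le_iff₀ ht0]
          nlinarith [abs_nonneg (e₁ * p)]
        linarith
      -- g = -lam*(-p) ... compute: τ=-1
      have key : -lam*(-p) + (1/2)*(-1)*t^2 + e₁*(-p/t) + e₂*t < M := by
        nlinarith [habs, ht1, ht2, ht3, sq_nonneg (t - (2*e₂+1))]
      nlinarith [key]
  · -- τ = 1, lam > 0 : z₂ = d := (1+|e₁|)/lam, z₁ = -t
    subst h1
    set d := (1 + |e₁|) / lam with hd
    have hd0 : 0 < d := div_pos (by positivity) hl
    have hc : 0 < lam * d + e₁ := by
      have : lam * d = 1 + |e₁| := by rw [hd]; field_simp [ne_of_gt hl]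
      nlinarith [abs_nonneg e₁, neg_abs_le e₁]
    obtain ⟨t, htA, htM⟩ := lin_unbdd ((lam*d + e₁)) ((1/2)*d^2 + e₂*d)
      (max 0 ((-p)/d)) M hc
    have ht0 : 0 ≤ t := le_trans (le_max_left _ _) htA
    have htp : -p / d ≤ t := le_trans (le_max_right _ _) htA
    refine ⟨-t, d, ?_, ?_⟩
    · have : -p ≤ t * d := by
        rw [div_le_iff₀ hd0] at htp; linarith
      nlinarith
    · nlinarith [htM]
  · -- τ = 1, e₁ ≠ 0
    subst h1
    obtain ⟨u, hu1, hue⟩ : ∃ u : ℝ, (u = 1 ∨ u = -1) ∧ u * e₁ = |e₁| := by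
      rcases lt_trichotomy e₁ 0 with h | h | h
      · exact ⟨-1, Or.inr rfl, by rw [abs_of_neg h]; ring⟩
      · exact absurd h he
      · exact ⟨1, Or.inl rfl, by rw [abs_of_pos h]; ring⟩
    set ε := |e₁| / (2*(|lam| + 1)) with hε
    have he0 : 0 < |e₁| := abs_pos.mpr he
    have hε0 : 0 < ε := div_pos he0 (by positivity)
    set d := u * ε with hd
    have huu : u * u = 1 := by rcases hu1 with h | h <;> subst h <;> norm_num
    have hdu : d * u = ε := by
      rw [hd]; linear_combination ε * huu
    have hc : 0 < u * (lam * d + e₁) := by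
      have h1 : u * (lam * d + e₁) = lam * ε + |e₁| := by
        rw [hd]; linear_combination lam * ε * huu + hue
      have h2 : lam * ε ≥ -(|e₁|/2) := by
        have hb : |lam * ε| ≤ |e₁| / 2 := by
          rw [abs_mul, abs_of_pos hε0, hε]
          have heq : |lam| * (|e₁| / (2*(|lam|+1))) = (|lam| * |e₁|) / (2*(|lam|+1)) := by
            ring
          rw [heq, div_le_div_iff₀ (by positivity) (by norm_num : (0:ℝ) < 2)]
          nlinarith [abs_nonneg lam, he0]
        nlinarith [neg_abs_le (lam * ε)]
      linarith
    obtain ⟨t, htA, htM⟩ := lin_unbdd (u * (lam*d + e₁)) ((1/2)*d^2 + e₂*d)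
      (max 0 ((-p)/ε)) M hc
    have ht0 : 0 ≤ t := le_trans (le_max_left _ _) htA
    have htp : -p / ε ≤ t := le_trans (le_max_right _ _) htA
    refine ⟨-(u*t), d, ?_, ?_⟩
    · have h1 : -p ≤ t * ε := by rw [div_le_iff₀ hε0] at htp; linarith
      have : -(u*t) * d = -(t * ε) := by
        have : u * d = ε := by rw [mul_comm]; exact hdu
        nlinarith [this]
      rw [one_mul, this]; linarith
    · have expand : lam * (-(u*t) * d) + e₁ * (-(u*t)) = -(u * (lam*d + e₁) * t) := by ring
      nlinarith [htM]
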